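/- arXiv:2208.04160 — 2 statements merged into one kernel-verified Lean document; each statement's English description precedes it below -/
import Mathlib

section
/- Let z = (L+K)^{-1}Ks. Then the internal conflict C = Σ_i k_i (z_i - s_i)^2 equals s^T K(L+K)^{-1} L K^{-1} L (L+K)^{-1} K s, which also equals z^T L K^{-1} L z. -/
open Matrix BigOperators


theorem lap_quad {n : ℕ} (w : Fin n → Fin n → ℝ)
    (hsymm : ∀ i j, w i j = w j i)
    (hdiag : ∀ i, w i i = 0)
    (L : Matrix (Fin n) (Fin n) ℝ)
    (hL : L = Matrix.of (fun i j => if i = j then ∑ l, w i l else -w i j))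
    (x : Fin n → ℝ) :
    2 * (x ⬝ᵥ L *ᵥ x) = ∑ i, ∑ j, w i j * (x i - x j)^2 := by
  have hLx : ∀ i, (L *ᵥ x) i = (∑ l, w i l) * x i - ∑ j, w i j * x j := by
    intro i
    simp only [hL, mulVec, dotProduct, of_apply]
    have : ∀ j, (if i = j then ∑ l, w i l else -w i j) * x j
        = (if j = i then (∑ l, w i l) * x i else 0) - w i j * x j := by
      intro j
      by_cases h : i = j
      · subst h; simp [hdiag i]
      · simp [h, Ne.symm h]
    rw [Finset.sum_congr rfl fun j _ => this j, Finset.sum_sub_distrib,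
      Finset.sum_ite_eq' Finset.univ i (fun _ => (∑ l, w i l) * x i)]
    simp
  have step1 : ∀ i, x i * (L *ᵥ x) i
      = ∑ j, (w i j * x i * x i - w i j * x i * x j) := by
    intro i
    rw [hLx i, Finset.sum_sub_distrib, mul_sub]
    congr 1
    · rw [Finset.sum_mul, Finset.mul_sum]
      exact Finset.sum_congr rfl fun j _ => by ring
    · rw [Finset.mul_sum]
      exact Finset.sum_congr rfl fun j _ => by ring
  calc 2 * (x ⬝ᵥ L *ᵥ x)
      = 2 * ∑ i, ∑ j, (w i j * x i * x i - w i j * x i * x j) := by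
        rw [dotProduct]; congr 1; exact Finset.sum_congr rfl fun i _ => step1 i
    _ = ∑ i, ∑ j, w i j * (x i - x j)^2 := by
        have key : ∀ i j, w i j * (x i - x j)^2
            = w i j * x i * x i + w j i * x j * x j - 2 * (w i j * x i * x j) := by
          intro i j; rw [hsymm j i]; ring
        simp only [key, Finset.sum_sub_distrib, Finset.sum_add_distrib]
        have h2 : ∑ i, ∑ j, w j i * x j * x j = ∑ i, ∑ j, w i j * x i * x i := by
          rw [Finset.sum_comm]
        have h3 : ∑ i : Fin n, ∑ j, 2 * (w i j * x i * x j)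
            = 2 * ∑ i : Fin n, ∑ j, w i j * x i * x j := by
          simp [Finset.mul_sum]
        rw [h2, h3, Finset.mul_sum]
        simp only [Finset.sum_sub_distrib, ← Finset.mul_sum]
        ring

theorem sym_dot {m : ℕ} (A : Matrix (Fin m) (Fin m) ℝ) (hA : Aᵀ = A)
    (x y : Fin m → ℝ) : x ⬝ᵥ A *ᵥ y = (A *ᵥ x) ⬝ᵥ y := by
  rw [dotProduct_mulVec]
  conv_lhs => rw [← hA]
  rw [vecMul_transpose]

/-- The internal conflict `C = Σᵢ kᵢ (zᵢ - sᵢ)²` equals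
`sᵀ K(L+K)⁻¹ L K⁻¹ L (L+K)⁻¹ K s`, which also equals `zᵀ L K⁻¹ L z`. -/
theorem stmt_13 {n : ℕ}
    (w : Fin n → Fin n → ℝ)
    (hsymm : ∀ i j, w i j = w j i) (hnonneg : ∀ i j, 0 ≤ w i j)
    (hdiag : ∀ i, w i i = 0)
    (hconn : (SimpleGraph.fromRel fun i j => 0 < w i j).Connected)
    (L : Matrix (Fin n) (Fin n) ℝ)
    (hL : L = Matrix.of (fun i j => if i = j then ∑ l, w i l else -w i j))
    (k : Fin n → ℝ) (hk : ∀ i, 0 < k i)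
    (s z : Fin n → ℝ)
    (hz : z = (L + Matrix.diagonal k)⁻¹ *ᵥ (Matrix.diagonal k *ᵥ s)) :
    (∑ i, k i * (z i - s i) ^ 2 =
        s ⬝ᵥ (Matrix.diagonal k * (L + Matrix.diagonal k)⁻¹ * L *
          Matrix.diagonal (fun i => (k i)⁻¹) * L * (L + Matrix.diagonal k)⁻¹ *
          Matrix.diagonal k) *ᵥ s) ∧
      ∑ i, k i * (z i - s i) ^ 2 =
        z ⬝ᵥ (L * Matrix.diagonal (fun i => (k i)⁻¹) * L) *ᵥ z := by
  set K : Matrix (Fin n) (Fin n) ℝ := Matrix.diagonal k with hK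
  set D : Matrix (Fin n) (Fin n) ℝ := Matrix.diagonal (fun i => (k i)⁻¹) with hD
  set M : Matrix (Fin n) (Fin n) ℝ := L + K with hM
  -- symmetry facts
  have hLsym : Lᵀ = L := by
    subst hL; ext i j
    simp only [transpose_apply, of_apply]
    by_cases h : i = j
    · subst h; simp
    · simp [h, Ne.symm h, hsymm j i]
  have hKsym : Kᵀ = K := Matrix.diagonal_transpose k
  have hMsym : Mᵀ = M := by rw [hM, transpose_add, hLsym, hKsym]
  -- positive definiteness of M
  have hLpos : ∀ x : Fin n → ℝ, 0 ≤ x ⬝ᵥ L *ᵥ x := by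
    intro x
    have h := lap_quad w hsymm hdiag L hL x
    nlinarith [Finset.sum_nonneg (fun i (_ : i ∈ Finset.univ) =>
      Finset.sum_nonneg (fun j (_ : j ∈ Finset.univ) =>
        mul_nonneg (hnonneg i j) (sq_nonneg (x i - x j))))]
  have hMpd : M.PosDef := by
    rw [Matrix.posDef_iff_dotProduct_mulVec]
    constructor
    · rw [Matrix.IsHermitian, Matrix.conjTranspose_eq_transpose_of_trivial, hMsym]
    · intro x hx
      simp only [star_trivial]
      rw [hM, add_mulVec, dotProduct_add]
      have h2 : 0 < x ⬝ᵥ K *ᵥ x := by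
        have : x ⬝ᵥ K *ᵥ x = ∑ i, k i * x i ^ 2 := by
          simp only [hK, dotProduct, mulVec_diagonal]
          exact Finset.sum_congr rfl fun i _ => by ring
        rw [this]
        obtain ⟨i, hi⟩ := Function.ne_iff.1 hx
        simp only [Pi.zero_apply] at hi
        refine Finset.sum_pos' (fun j _ => mul_nonneg (hk j).le (sq_nonneg _)) ⟨i, Finset.mem_univ i, ?_⟩
        have hx2 : 0 < x i ^ 2 := by
          rcases lt_or_gt_of_ne hi with h | h <;> nlinarith
        exact mul_pos (hk i) hx2
      linarith [hLpos x]
  have hdet : IsUnit M.det := (Matrix.isUnit_iff_isUnit_det M).1 hMpd.isUnit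
  have hMinvsym : (M⁻¹)ᵀ = M⁻¹ := by rw [Matrix.transpose_nonsing_inv, hMsym]
  -- M z = K s
  have hMz : M *ᵥ z = K *ᵥ s := by
    rw [hz, mulVec_mulVec, Matrix.mul_nonsing_inv _ hdet, one_mulVec]
  have hKzs : ∀ i, (L *ᵥ z) i = -(k i * (z i - s i)) := by
    intro i
    have h1 : (M *ᵥ z) i = (K *ᵥ s) i := by rw [hMz]
    rw [hM, add_mulVec] at h1
    simp only [hK, Pi.add_apply, mulVec_diagonal] at h1
    linarith
  -- core sum identity
  have core : ∑ i, k i * (z i - s i) ^ 2 = ∑ i, (k i)⁻¹ * ((L *ᵥ z) i)^2 := by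
    refine Finset.sum_congr rfl fun i _ => ?_
    rw [hKzs i]
    have := (hk i).ne'
    field_simp
  -- second equality
  have hsecond : z ⬝ᵥ (L * D * L) *ᵥ z = ∑ i, (k i)⁻¹ * ((L *ᵥ z) i)^2 := by
    rw [show (L * D * L) *ᵥ z = L *ᵥ (D *ᵥ (L *ᵥ z)) by
      rw [mulVec_mulVec, mulVec_mulVec]]
    rw [sym_dot L hLsym]
    simp only [hD, dotProduct, mulVec_diagonal]
    exact Finset.sum_congr rfl fun i _ => by ring
  -- first equality
  have hfirst : s ⬝ᵥ (K * M⁻¹ * L * D * L * M⁻¹ * K) *ᵥ s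
      = z ⬝ᵥ (L * D * L) *ᵥ z := by
    have hexp : (K * M⁻¹ * L * D * L * M⁻¹ * K) *ᵥ s
        = K *ᵥ (M⁻¹ *ᵥ ((L * D * L) *ᵥ z)) := by
      rw [hz]
      simp only [← mulVec_mulVec, ← Matrix.mul_assoc]
    rw [hexp]
    try rw [sym_dot K hKsym]
    try rw [sym_dot M⁻¹ hMinvsym]
    try rw [← hz]
  refine ⟨?_, by rw [core, hsecond]⟩
  rw [core, ← hsecond, ← hfirst]
end

section
/- Let z = (L+K)^{-1}Ks, and define C = z^T L K^{-1} L z, D = z^T L z, P = z^T K z. Then the conservation law C + 2D + P = Σ_i k_i s_i^2 = s^T K s holds. -/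
open Matrix BigOperators

/-- Conservation law: with `C = zᵀ L K⁻¹ L z`, `D = zᵀ L z`, `P = zᵀ K z`,
one has `C + 2D + P = Σᵢ kᵢ sᵢ² = sᵀ K s`. -/
theorem stmt_17 {n : ℕ}
    (w : Fin n → Fin n → ℝ)
    (hsymm : ∀ i j, w i j = w j i) (hnonneg : ∀ i j, 0 ≤ w i j)
    (hdiag : ∀ i, w i i = 0)
    (hconn : (SimpleGraph.fromRel fun i j => 0 < w i j).Connected)
    (L : Matrix (Fin n) (Fin n) ℝ)
    (hL : L = Matrix.of (fun i j => if i = j then ∑ l, w i l else -w i j))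
    (k : Fin n → ℝ) (hk : ∀ i, 0 < k i)
    (s z : Fin n → ℝ)
    (hz : z = (L + Matrix.diagonal k)⁻¹ *ᵥ (Matrix.diagonal k *ᵥ s))
    (C D P : ℝ)
    (hC : C = z ⬝ᵥ (L * Matrix.diagonal (fun i => (k i)⁻¹) * L) *ᵥ z)
    (hD : D = z ⬝ᵥ L *ᵥ z)
    (hP : P = z ⬝ᵥ Matrix.diagonal k *ᵥ z) :
    C + 2 * D + P = ∑ i, k i * s i ^ 2 ∧
      C + 2 * D + P = s ⬝ᵥ Matrix.diagonal k *ᵥ s := by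
  set K : Matrix (Fin n) (Fin n) ℝ := Matrix.diagonal k with hK
  set Kinv : Matrix (Fin n) (Fin n) ℝ := Matrix.diagonal (fun i => (k i)⁻¹) with hKinv
  set M : Matrix (Fin n) (Fin n) ℝ := L + K with hM
  -- L as diagonal-of-degrees minus weight matrix, entrywise
  have hLentry : ∀ i j, L i j = (if i = j then ∑ l, w i l else 0) - w i j := by
    intro i j
    rw [hL]
    by_cases h : i = j
    · subst h; simp [hdiag i]
    · simp [h]
  -- quadratic form of L: Laplacian energy
  have hquad : ∀ x : Fin n → ℝ,
      2 * (x ⬝ᵥ L *ᵥ x) = ∑ i, ∑ j, w i j * (x i - x j) ^ 2 := by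
    intro x
    have hx : x ⬝ᵥ L *ᵥ x = ∑ i, ∑ j, (w i j * x i * x i - w i j * x i * x j) := by
      simp only [dotProduct, mulVec, dotProduct]
      refine Finset.sum_congr rfl fun i _ => ?_
      rw [Finset.mul_sum]
      have h1 : ∀ j ∈ Finset.univ, x i * (L i j * x j)
          = (if i = j then (∑ l, w i l) * (x i * x j) else 0) - w i j * x i * x j := by
        intro j _
        rw [hLentry i j]
        by_cases h : i = j <;> simp [h] <;> ring
      rw [Finset.sum_congr rfl h1, Finset.sum_sub_distrib, Finset.sum_ite_eq,
        Finset.sum_sub_distrib]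
      simp only [Finset.mem_univ, if_true]
      congr 1
      rw [Finset.sum_mul]
      refine Finset.sum_congr rfl fun j _ => by ring
    rw [hx]
    have hswap : ∑ i, ∑ j, w i j * x j * x j = ∑ i, ∑ j, w i j * x i * x i := by
      rw [Finset.sum_comm]
      refine Finset.sum_congr rfl fun i _ => Finset.sum_congr rfl fun j _ => ?_
      rw [hsymm j i]
    have expand : ∑ i, ∑ j, w i j * (x i - x j) ^ 2
        = (∑ i, ∑ j, w i j * x i * x i) + (∑ i, ∑ j, w i j * x j * x j)
          - 2 * ∑ i, ∑ j, w i j * x i * x j := by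
      simp only [Finset.mul_sum, ← Finset.sum_add_distrib, ← Finset.sum_sub_distrib]
      refine Finset.sum_congr rfl fun i _ => Finset.sum_congr rfl fun j _ => ?_
      ring
    rw [expand, hswap]
    simp only [Finset.sum_sub_distrib]
    ring
  have hLnonneg : ∀ x : Fin n → ℝ, 0 ≤ x ⬝ᵥ L *ᵥ x := by
    intro x
    have h2 := hquad x
    have : 0 ≤ ∑ i, ∑ j, w i j * (x i - x j) ^ 2 :=
      Finset.sum_nonneg fun i _ => Finset.sum_nonneg fun j _ =>
        mul_nonneg (hnonneg i j) (sq_nonneg _)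
    nlinarith
  -- M is positive definite
  have hMsymm : Mᵀ = M := by
    ext i j
    show M j i = M i j
    rw [hM]
    simp only [Matrix.add_apply, hLentry, hK]
    by_cases h : i = j
    · subst h; rfl
    · rw [hsymm j i]
      simp [Matrix.diagonal_apply, h, Ne.symm h]
  have hMherm : M.IsHermitian := by
    rw [Matrix.IsHermitian, Matrix.conjTranspose]
    ext i j
    simpa using congrFun (congrFun hMsymm i) j
  have hMpd : M.PosDef := by
    refine Matrix.posDef_iff_dotProduct_mulVec.mpr ⟨hMherm, fun x hx => ?_⟩
    have hstar : star x = x := rfl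
    have hMx : x ⬝ᵥ M *ᵥ x = x ⬝ᵥ L *ᵥ x + ∑ i, k i * x i ^ 2 := by
      rw [hM, Matrix.add_mulVec, dotProduct_add]
      congr 1
      simp [hK, dotProduct, Matrix.mulVec_diagonal]
      refine Finset.sum_congr rfl fun i _ => by ring
    have hxpos : 0 < ∑ i, k i * x i ^ 2 := by
      obtain ⟨i, hi⟩ := Function.ne_iff.mp hx
      refine Finset.sum_pos' (fun j _ => mul_nonneg (hk j).le (sq_nonneg _)) ⟨i, Finset.mem_univ i, ?_⟩
      have hxi : x i ≠ 0 := by simpa using hi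
      exact mul_pos (hk i) (lt_of_le_of_ne (sq_nonneg _) (Ne.symm (pow_ne_zero 2 hxi)))
    show 0 < star x ⬝ᵥ M *ᵥ x
    rw [hstar, hMx]
    have := hLnonneg x
    linarith
  have hdet : IsUnit M.det := isUnit_iff_ne_zero.mpr (ne_of_gt hMpd.det_pos)
  -- M z = K s
  have hMz : M *ᵥ z = K *ᵥ s := by
    rw [hz, Matrix.mulVec_mulVec, hM, Matrix.mul_nonsing_inv _ hdet, Matrix.one_mulVec]
  -- K * Kinv = 1 = Kinv * K
  have hKK : K * Kinv = 1 := by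
    rw [hK, hKinv, Matrix.diagonal_mul_diagonal]
    have h1 : (fun i => k i * (k i)⁻¹) = fun _ : Fin n => (1 : ℝ) := by
      funext i; exact mul_inv_cancel₀ (hk i).ne'
    rw [h1, Matrix.diagonal_one]
  have hKK' : Kinv * K = 1 := by
    rw [hK, hKinv, Matrix.diagonal_mul_diagonal]
    have h1 : (fun i => (k i)⁻¹ * k i) = fun _ : Fin n => (1 : ℝ) := by
      funext i; exact inv_mul_cancel₀ (hk i).ne'
    rw [h1, Matrix.diagonal_one]
  -- key matrix identity
  have hkey : M * Kinv * M = L * Kinv * L + L + L + K := by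
    rw [hM]
    rw [Matrix.add_mul, Matrix.add_mul, Matrix.mul_add, Matrix.mul_add]
    rw [Matrix.mul_assoc L Kinv K, hKK', Matrix.mul_one, hKK, Matrix.one_mul, Matrix.one_mul]
    noncomm_ring
  -- the total quadratic form
  have htotal : C + 2 * D + P = z ⬝ᵥ (M * Kinv * M) *ᵥ z := by
    rw [hkey, hC, hD, hP]
    simp only [Matrix.add_mulVec, dotProduct_add]
    ring
  have hsym_step : z ⬝ᵥ (M * Kinv * M) *ᵥ z = (M *ᵥ z) ⬝ᵥ Kinv *ᵥ (M *ᵥ z) := by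
    rw [← Matrix.mulVec_mulVec, ← Matrix.mulVec_mulVec]
    rw [dotProduct_mulVec z M, ← Matrix.mulVec_transpose, hMsymm]
  have hfinal : (K *ᵥ s) ⬝ᵥ Kinv *ᵥ (K *ᵥ s) = ∑ i, k i * s i ^ 2 := by
    simp only [hK, hKinv, dotProduct, Matrix.mulVec_diagonal]
    refine Finset.sum_congr rfl fun i _ => ?_
    have hki := (hk i).ne'
    field_simp
  have hsum : C + 2 * D + P = ∑ i, k i * s i ^ 2 := by
    rw [htotal, hsym_step, hMz, hfinal]
  refine ⟨hsum, ?_⟩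
  rw [hsum]
  simp only [hK, dotProduct, Matrix.mulVec_diagonal]
  exact Finset.sum_congr rfl fun i _ => by ring
end
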